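/- Define y(p) = min{w/p, inf{x ∈ [0,1] : V'(x)·(1−x) ≤ p·C'(p·x)}} for p > 0 (and y(0) = 1), where V is differentiable, concave, weakly increasing with V(0)=0, C is differentiable, convex, weakly increasing with C(0)=0, and w > 0. Then y is weakly decreasing in p. -/

import Mathlib

/-- A monotone differentiable function has nonnegative derivative. -/
lemma monotone_deriv_nonneg' {C : ℝ → ℝ} (hCdiff : Differentiable ℝ C)
    (hCmono : Monotone C) (x : ℝ) : 0 ≤ deriv C x := by
  have h := (hCdiff x).hasDerivAt
  rw [hasDerivAt_iff_tendsto_slope] at h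
  have h' : Filter.Tendsto (slope C x) (nhdsWithin x (Set.Ioi x)) (nhds (deriv C x)) :=
    h.mono_left (nhdsWithin_mono _ (fun y hy => ne_of_gt hy))
  refine ge_of_tendsto h' ?_
  filter_upwards [self_mem_nhdsWithin] with y hy
  have hxy : x < y := hy
  rw [slope_def_field]
  exact div_nonneg (sub_nonneg.2 (hCmono hxy.le)) (sub_nonneg.2 hxy.le)

/-- The minimal stable allocation function
y(p) = min{w/p, inf{x ∈ [0,1] : V'(x)(1−x) ≤ p·C'(px)}} for p > 0, y(0) = 1,
is weakly decreasing in p, for V differentiable, concave, weakly increasing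
with V(0) = 0, C differentiable, convex, weakly increasing with C(0) = 0,
and w > 0. -/
theorem minimal_stable_allocation_antitone
    (V C : ℝ → ℝ) (w : ℝ) (hw : 0 < w)
    (hVdiff : Differentiable ℝ V)
    (hVconc : ConcaveOn ℝ Set.univ V)
    (hVmono : Monotone V) (hV0 : V 0 = 0)
    (hCdiff : Differentiable ℝ C)
    (hCconv : ConvexOn ℝ Set.univ C)
    (hCmono : Monotone C) (hC0 : C 0 = 0)
    (y : ℝ → ℝ)
    (hy0 : y 0 = 1)
    (hy : ∀ p > (0:ℝ), y p =
      min (w / p)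
        (sInf {x : ℝ | x ∈ Set.Icc (0:ℝ) 1 ∧
          deriv V x * (1 - x) ≤ p * deriv C (p * x)})) :
    AntitoneOn y (Set.Ici (0:ℝ)) := by
  have hC'nonneg : ∀ x, 0 ≤ deriv C x := monotone_deriv_nonneg' hCdiff hCmono
  have hC'mono : MonotoneOn (deriv C) Set.univ :=
    hCconv.monotoneOn_deriv (fun x _ => hCdiff x)
  set S : ℝ → Set ℝ := fun p => {x : ℝ | x ∈ Set.Icc (0:ℝ) 1 ∧
      deriv V x * (1 - x) ≤ p * deriv C (p * x)} with hS
  have hone : ∀ p : ℝ, 0 < p → (1:ℝ) ∈ S p := by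
    intro p hp
    refine ⟨⟨zero_le_one, le_refl 1⟩, ?_⟩
    simp only [sub_self, mul_zero]
    exact mul_nonneg hp.le (hC'nonneg _)
  have hbdd : ∀ p : ℝ, BddBelow (S p) := by
    intro p
    exact ⟨0, fun x hx => hx.1.1⟩
  have hsub : ∀ p p' : ℝ, 0 < p → p ≤ p' → S p ⊆ S p' := by
    intro p p' hp hpp' x hx
    obtain ⟨hx01, hle⟩ := hx
    refine ⟨hx01, hle.trans ?_⟩
    have h1 : deriv C (p * x) ≤ deriv C (p' * x) :=
      hC'mono trivial trivial (mul_le_mul_of_nonneg_right hpp' hx01.1)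
    calc p * deriv C (p * x) ≤ p' * deriv C (p * x) :=
          mul_le_mul_of_nonneg_right hpp' (hC'nonneg _)
      _ ≤ p' * deriv C (p' * x) :=
          mul_le_mul_of_nonneg_left h1 (hp.trans_le hpp').le
  -- y p ≤ 1 for p > 0
  have hle1 : ∀ p : ℝ, 0 < p → y p ≤ 1 := by
    intro p hp
    rw [hy p hp]
    exact (min_le_right _ _).trans (csInf_le (hbdd p) (hone p hp))
  intro a ha b hb hab
  rcases eq_or_lt_of_le (Set.mem_Ici.mp ha) with h0a | h0a
  · rcases eq_or_lt_of_le (h0a.trans_le hab) with h0b | h0b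
    · rw [← h0a, ← h0b]
    · rw [← h0a, hy0]
      exact hle1 b h0b
  · have h0b : 0 < b := h0a.trans_le hab
    rw [hy a h0a, hy b h0b]
    refine min_le_min ?_ ?_
    · exact div_le_div_of_nonneg_left hw.le h0a hab
    · exact csInf_le_csInf (hbdd b) ⟨1, hone a h0a⟩ (hsub a b h0a hab)
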